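/- For every real number λ and every integer k ≥ 1, the degenerate Bell number satisfies the Dobinski-like formula φ_{k,λ} = (1/e) Σ_{n=0}^{∞} (n)_{k,λ}/n! = (1/e) Σ_{n=1}^{∞} (n−λ)_{k−1,λ}/(n−1)!, where both series converge. (This is formula (37), the main Dobinski-like formula of the paper.) -/

import Mathlib

open Finset

/-- Generalized falling factorial `(x)_{n,λ} = x(x-λ)⋯(x-(n-1)λ)`. -/
noncomputable def dfall (lam x : ℝ) (n : ℕ) : ℝ := ∏ i ∈ Finset.range n, (x - i * lam)

/-- Ordinary falling factorial `(x)_n = x(x-1)⋯(x-n+1)`. -/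
noncomputable def ffall (x : ℝ) (n : ℕ) : ℝ := ∏ i ∈ Finset.range n, (x - i)

/-- Degenerate Stirling numbers of the second kind, defined by the recurrence
`S_{2,λ}(0,0)=1`, `S_{2,λ}(n,k)=0` for `k>n` (and `k<0`), and
`S_{2,λ}(n+1,k) = S_{2,λ}(n,k-1) + (k-nλ) S_{2,λ}(n,k)`. -/
noncomputable def dStir (lam : ℝ) : ℕ → ℕ → ℝ
  | 0, 0 => 1
  | 0, _ + 1 => 0
  | n + 1, 0 => ((0 : ℝ) - n * lam) * dStir lam n 0
  | n + 1, k + 1 => dStir lam n k + (((k : ℝ) + 1) - n * lam) * dStir lam n (k + 1)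

/-- Degenerate Bell polynomials `φ_{n,λ}(x) = Σ_{k=0}^n S_{2,λ}(n,k) x^k`. -/
noncomputable def dBell (lam x : ℝ) (n : ℕ) : ℝ :=
  ∑ k ∈ Finset.range (n + 1), dStir lam n k * x ^ k

lemma dStir_eq_zero (lam : ℝ) : ∀ n j : ℕ, n < j → dStir lam n j = 0 := by
  intro n
  induction n with
  | zero => intro j hj; match j, hj with
            | j + 1, _ => rfl
  | succ n ih =>
      intro j hj
      match j, hj with
      | j + 1, hj =>
        show dStir lam n j + (((j : ℝ) + 1) - n * lam) * dStir lam n (j + 1) = 0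
        rw [ih j (by omega), ih (j + 1) (by omega)]
        ring

lemma ffall_succ (x : ℝ) (j : ℕ) : ffall x (j + 1) = ffall x j * (x - j) := by
  simp [ffall, Finset.prod_range_succ]

/-- Key expansion: `(x)_{n,λ} = Σ_j S_{2,λ}(n,j) (x)_j`. -/
lemma dfall_eq_sum (lam x : ℝ) : ∀ n : ℕ,
    dfall lam x n = ∑ j ∈ Finset.range (n + 1), dStir lam n j * ffall x j := by
  intro n
  induction n with
  | zero => simp [dfall, dStir, ffall]
  | succ n ih =>
      have h1 : dfall lam x (n + 1) = (x - n * lam) * dfall lam x n := by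
        rw [dfall, dfall, Finset.prod_range_succ]; ring
      rw [h1, ih, Finset.mul_sum]
      rw [Finset.sum_range_succ' (fun j => dStir lam (n + 1) j * ffall x j) (n + 1)]
      have hz : dStir lam (n + 1) (n + 1 + 1) = 0 := dStir_eq_zero lam _ _ (by omega)
      -- expand LHS
      have expand : ∀ j : ℕ, (x - n * lam) * (dStir lam n j * ffall x j)
          = dStir lam n j * ffall x (j + 1) + ((j : ℝ) - n * lam) * dStir lam n j * ffall x j := by
        intro j
        rw [ffall_succ]
        ring
      rw [Finset.sum_congr rfl (fun j _ => expand j), Finset.sum_add_distrib]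
      -- second sum: peel the first term
      rw [Finset.sum_range_succ' (fun j => ((j : ℝ) - n * lam) * dStir lam n j * ffall x j) n]
      have hS0 : dStir lam (n + 1) 0 = ((0 : ℝ) - n * lam) * dStir lam n 0 := rfl
      have hSsucc : ∀ j : ℕ, dStir lam (n + 1) (j + 1)
          = dStir lam n j + (((j : ℝ) + 1) - n * lam) * dStir lam n (j + 1) := fun j => rfl
      -- first sum on RHS over range (n+2) shifted: it's over range(n+1) of succ terms
      have hext : ∑ j ∈ Finset.range n, (((j : ℕ) + 1 : ℝ) - n * lam) * dStir lam n (j + 1) * ffall x (j + 1)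
          = ∑ j ∈ Finset.range (n + 1), (((j : ℕ) + 1 : ℝ) - n * lam) * dStir lam n (j + 1) * ffall x (j + 1) := by
        rw [Finset.sum_range_succ, dStir_eq_zero lam n (n + 1) (by omega)]
        ring
      push_cast at hext ⊢
      rw [hext]
      have hff0 : ffall x 0 = 1 := by simp [ffall]
      simp only [hSsucc, hS0, hff0]
      rw [← add_assoc, ← Finset.sum_add_distrib]
      congr 1
      apply Finset.sum_congr rfl
      intro j _
      ring

lemma ffall_nat_of_le (n : ℕ) : ∀ j : ℕ, j ≤ n → ffall (n : ℝ) j = (n.descFactorial j : ℝ) := by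
  intro j
  induction j with
  | zero => simp [ffall]
  | succ j ih =>
      intro h
      rw [ffall_succ, ih (by omega), Nat.descFactorial_succ]
      have : ((n - j : ℕ) : ℝ) = (n : ℝ) - j := by
        have : j ≤ n := by omega
        push_cast [this]; ring
      push_cast
      rw [this]
      ring

lemma ffall_nat_of_gt (n j : ℕ) (h : n < j) : ffall (n : ℝ) j = 0 := by
  apply Finset.prod_eq_zero (Finset.mem_range.mpr h)
  simp

/-- `ffall n j / n! = 1/(n-j)!` if `j ≤ n`, else `0`. -/
lemma ffall_div_factorial (j n : ℕ) :
    ffall (n : ℝ) j / n.factorial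
      = if j ≤ n then (((n - j).factorial : ℝ))⁻¹ else 0 := by
  by_cases h : j ≤ n
  · rw [if_pos h, ffall_nat_of_le n j h]
    have key : ((n - j).factorial : ℝ) * (n.descFactorial j : ℝ) = (n.factorial : ℝ) := by
      exact_mod_cast congrArg Nat.cast (Nat.factorial_mul_descFactorial h)
    have hf : (n.factorial : ℝ) ≠ 0 := Nat.cast_ne_zero.mpr (Nat.factorial_ne_zero n)
    have hf2 : ((n - j).factorial : ℝ) ≠ 0 := Nat.cast_ne_zero.mpr (Nat.factorial_ne_zero _)
    field_simp
    linarith [key]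
  · rw [if_neg h, ffall_nat_of_gt n j (by omega)]
    simp

lemma summable_inv_factorial : Summable (fun n : ℕ => ((n.factorial : ℝ))⁻¹) := by
  have := NormedSpace.expSeries_div_summable (1 : ℝ)
  simpa using this

lemma tsum_inv_factorial : ∑' n : ℕ, ((n.factorial : ℝ))⁻¹ = Real.exp 1 := by
  rw [Real.exp_eq_exp_ℝ, NormedSpace.exp_eq_tsum_div]
  simp [one_div]

lemma summable_F (j : ℕ) : Summable (fun n : ℕ => ffall (n : ℝ) j / n.factorial) := by
  simp only [ffall_div_factorial]
  rw [← summable_nat_add_iff j]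
  have : (fun n : ℕ => if j ≤ n + j then (((n + j - j).factorial : ℝ))⁻¹ else 0)
      = fun n : ℕ => ((n.factorial : ℝ))⁻¹ := by
    funext n; rw [if_pos (by omega)]; simp
  rw [this]
  exact summable_inv_factorial

lemma tsum_F (j : ℕ) : ∑' n : ℕ, ffall (n : ℝ) j / n.factorial = Real.exp 1 := by
  simp only [ffall_div_factorial]
  have hs : Summable (fun n : ℕ => if j ≤ n then (((n - j).factorial : ℝ))⁻¹ else 0) := by
    have := summable_F j
    simpa only [ffall_div_factorial] using this
  rw [← Summable.sum_add_tsum_nat_add j hs]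
  have h1 : ∑ i ∈ Finset.range j, (if j ≤ i then (((i - j).factorial : ℝ))⁻¹ else 0) = 0 := by
    apply Finset.sum_eq_zero
    intro i hi
    rw [if_neg (by simp at hi; omega)]
  have h2 : (fun n : ℕ => if j ≤ n + j then (((n + j - j).factorial : ℝ))⁻¹ else 0)
      = fun n : ℕ => ((n.factorial : ℝ))⁻¹ := by
    funext n; rw [if_pos (by omega)]; simp
  rw [h1, h2, tsum_inv_factorial, zero_add]

theorem dBellNumber_dobinski (lam : ℝ) (k : ℕ) (hk : 1 ≤ k) :
    Summable (fun n : ℕ => dfall lam (n : ℝ) k / n.factorial)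
      ∧ Summable (fun n : ℕ => dfall lam ((n : ℝ) + 1 - lam) (k - 1) / n.factorial)
      ∧ dBell lam 1 k = (Real.exp 1)⁻¹ * ∑' n : ℕ, dfall lam (n : ℝ) k / n.factorial
      ∧ dBell lam 1 k
          = (Real.exp 1)⁻¹ * ∑' n : ℕ, dfall lam ((n : ℝ) + 1 - lam) (k - 1) / n.factorial := by
  set G : ℕ → ℝ := fun n => dfall lam (n : ℝ) k / n.factorial with hG
  have hGeq : ∀ n : ℕ, G n = ∑ j ∈ Finset.range (k + 1), dStir lam k j * (ffall (n : ℝ) j / n.factorial) := by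
    intro n
    rw [hG]
    simp only [dfall_eq_sum lam (n : ℝ) k, Finset.sum_div]
    exact Finset.sum_congr rfl (fun j _ => by ring)
  have hGsum : Summable G := by
    rw [show G = fun n : ℕ => ∑ j ∈ Finset.range (k + 1), dStir lam k j * (ffall (n : ℝ) j / (n.factorial : ℝ)) from funext hGeq]
    exact summable_sum fun j _ => (summable_F j).mul_left _
  have htsumG : ∑' n, G n = Real.exp 1 * dBell lam 1 k := by
    rw [show G = fun n : ℕ => ∑ j ∈ Finset.range (k + 1), dStir lam k j * (ffall (n : ℝ) j / (n.factorial : ℝ)) from funext hGeq]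
    rw [Summable.tsum_finsetSum (fun j _ => (summable_F j).mul_left _)]
    rw [dBell, Finset.mul_sum]
    apply Finset.sum_congr rfl
    intro j _
    rw [tsum_mul_left, tsum_F]
    ring
  -- relate second series to shift of G
  have hshift : ∀ n : ℕ, dfall lam ((n : ℝ) + 1 - lam) (k - 1) / n.factorial = G (n + 1) := by
    intro n
    have hGn1 : G (n + 1) = dfall lam (((n + 1 : ℕ) : ℝ)) k / (((n + 1 : ℕ).factorial : ℝ)) := rfl
    rw [hGn1]
    have hk1 : k - 1 + 1 = k := by omega
    have hd : dfall lam ((n : ℝ) + 1) k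
        = dfall lam ((n : ℝ) + 1 - lam) (k - 1) * ((n : ℝ) + 1) := by
      rw [dfall, dfall, ← hk1, Finset.prod_range_succ']
      simp only [Nat.cast_zero, zero_mul, sub_zero]
      apply congrArg (· * ((n : ℝ) + 1))
      apply Finset.prod_congr rfl
      intro i _
      push_cast
      ring
    push_cast [Nat.factorial_succ]
    rw [show (n : ℝ) + 1 = ((n : ℕ) : ℝ) + 1 from rfl] at hd
    rw [hd]
    have h1 : ((n : ℝ) + 1) ≠ 0 := by positivity
    have h2 : (n.factorial : ℝ) ≠ 0 := Nat.cast_ne_zero.mpr (Nat.factorial_ne_zero n)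
    field_simp
  have hG0 : G 0 = 0 := by
    rw [hG]
    simp only [Nat.cast_zero, Nat.factorial_zero, Nat.cast_one, div_one]
    apply Finset.prod_eq_zero (Finset.mem_range.mpr (by omega : 0 < k))
    simp
  have hfun : (fun n : ℕ => dfall lam ((n : ℝ) + 1 - lam) (k - 1) / (n.factorial : ℝ))
      = fun n => G (n + 1) := funext hshift
  have hsum2 : Summable (fun n : ℕ => dfall lam ((n : ℝ) + 1 - lam) (k - 1) / n.factorial) := by
    rw [hfun]
    exact (summable_nat_add_iff 1).mpr hGsum
  have htsum2 : ∑' n : ℕ, dfall lam ((n : ℝ) + 1 - lam) (k - 1) / n.factorial = ∑' n, G n := by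
    rw [hfun, Summable.tsum_eq_zero_add hGsum, hG0, zero_add]
  have hexp : Real.exp 1 ≠ 0 := Real.exp_ne_zero 1
  refine ⟨hGsum, hsum2, ?_, ?_⟩
  · rw [htsumG]; field_simp
  · rw [htsum2, htsumG]; field_simp
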